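/- arXiv:1507.07944 — 2 statements merged into one kernel-verified Lean document; each statement's English description precedes it below -/
import Mathlib

section
/- Let U ⊆ V with U^c = V∖U, and let β ∈ ℝ^V be such that the principal submatrix (H_β)_{U,U} is positive definite. Set Ĝ^U = ((H_β)_{U,U})^{−1}, η̂_i = η_i + Σ_{j∈U^c} W_{i,j} for i∈U, W̌ = W_{U^c,U^c} + W_{U^c,U} Ĝ^U W_{U,U^c} and η̌ = η_{U^c} + W_{U^c,U} Ĝ^U (η_U). Then W̌ is a symmetric U^c×U^c matrix with nonnegative entries, η̌ has nonnegative entries, H_β is positive definite if and only if both (H_β)_{U,U} and 2·diag(β_{U^c}) − W̌ are positive definite, and the densities satisfy the factorization f_{ν_V^{W,η}}(β) = f_{ν_U^{W_{U,U},η̂}}(β_U) · f_{ν_{U^c}^{W̌,η̌}}(β_{U^c}). In particular, under ν_V^{W,η} the conditional law of β_{U^c} given β_U is ν_{U^c}^{W̌,η̌}. -/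
open Matrix MeasureTheory

/-- The Schrödinger matrix `H_β = 2 diag(β) − W`. -/
noncomputable def Hmat {V : Type*} [Fintype V] [DecidableEq V]
    (W : Matrix V V ℝ) (β : V → ℝ) : Matrix V V ℝ :=
  Matrix.diagonal (fun i => 2 * β i) - W

open scoped Classical in
/-- The density of the measure `ν_V^{W,η}` with respect to Lebesgue measure on `ℝ^V`. -/
noncomputable def densEta {V : Type*} [Fintype V] [DecidableEq V]
    (W : Matrix V V ℝ) (η : V → ℝ) (β : V → ℝ) : ℝ :=
  (if (Hmat W β).PosDef then (1 : ℝ) else 0)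
    * ((2 / Real.pi) ^ ((Fintype.card V : ℝ) / 2))
    * Real.exp (-(1/2) * ((1 : V → ℝ) ⬝ᵥ (Hmat W β).mulVec 1)
        - (1/2) * (η ⬝ᵥ ((Hmat W β)⁻¹).mulVec η) + (η ⬝ᵥ (1 : V → ℝ)))
    * ((Hmat W β).det) ^ (-(1/2) : ℝ)

set_option linter.unusedSectionVars false

section Aux

variable {m n : Type*} [Fintype m] [Fintype n] [DecidableEq m] [DecidableEq n]

lemma aux_dot_comp (e : m ≃ n) (u v : n → ℝ) : (u ∘ e) ⬝ᵥ (v ∘ e) = u ⬝ᵥ v := by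
  simp only [dotProduct]
  exact Fintype.sum_equiv e _ _ fun i => rfl

lemma aux_dot_transfer (e : m ≃ n) (M : Matrix n n ℝ) (u v : n → ℝ) :
    (u ∘ e) ⬝ᵥ (M.submatrix e e) *ᵥ (v ∘ e) = u ⬝ᵥ M *ᵥ v := by
  rw [Matrix.submatrix_mulVec_equiv]
  have hv : (v ∘ e) ∘ e.symm = v := by ext x; simp
  rw [hv]
  exact aux_dot_comp e u (M *ᵥ v)

lemma aux_posDef_submatrix {M : Matrix n n ℝ} (hM : M.PosDef) (e : m ≃ n) :
    (M.submatrix e e).PosDef := by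
  refine Matrix.PosDef.of_dotProduct_mulVec_pos ((Matrix.isHermitian_submatrix_equiv e).mpr hM.1) fun x hx => ?_
  have hx' : x ∘ e.symm ≠ 0 := by
    intro h0
    apply hx
    ext i
    have := congrFun h0 (e i)
    simpa using this
  have h := hM.dotProduct_mulVec_pos hx'
  have hkey := aux_dot_transfer e M (x ∘ e.symm) (x ∘ e.symm)
  have he : (x ∘ e.symm) ∘ e = x := by ext i; simp
  rw [he] at hkey
  simp only [star_trivial] at h ⊢
  rw [hkey]
  exact h

lemma aux_posDef_submatrix_iff (e : m ≃ n) {M : Matrix n n ℝ} :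
    (M.submatrix e e).PosDef ↔ M.PosDef := by
  constructor
  · intro h
    have := aux_posDef_submatrix h e.symm
    simpa [Matrix.submatrix_submatrix] using this
  · exact fun h => aux_posDef_submatrix h e

lemma aux_posDef_of_posSemidef {M : Matrix n n ℝ} (h : M.PosSemidef) (hd : IsUnit M.det) :
    M.PosDef := by
  refine Matrix.PosDef.of_dotProduct_mulVec_pos h.1 fun x hx => ?_
  rcases lt_or_eq_of_le (h.dotProduct_mulVec_nonneg x) with hlt | heq
  · exact hlt
  · exfalso
    apply hx
    have h0 : M *ᵥ x = 0 := (h.dotProduct_mulVec_zero_iff x).mp heq.symm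
    have hinj : Function.Injective M.mulVec :=
      Matrix.mulVec_injective_iff_isUnit.mpr ((Matrix.isUnit_iff_isUnit_det M).mpr hd)
    have h1 : M *ᵥ x = M *ᵥ 0 := by rw [h0, Matrix.mulVec_zero]
    exact hinj h1

lemma aux_mmatrix_nonneg {A : Matrix n n ℝ} (hA : A.PosDef)
    (hoff : ∀ i j, i ≠ j → A i j ≤ 0) {x c : n → ℝ} (hc : ∀ i, 0 ≤ c i)
    (hx : A *ᵥ x = c) : ∀ i, 0 ≤ x i := by
  set xm : n → ℝ := fun i => max (-x i) 0 with hxm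
  set xp : n → ℝ := fun i => max (x i) 0 with hxp
  have hxm0 : ∀ i, 0 ≤ xm i := fun i => le_max_right _ _
  have hxp0 : ∀ i, 0 ≤ xp i := fun i => le_max_right _ _
  have hmp : ∀ i, xm i * xp i = 0 := by
    intro i
    rcases le_total (x i) 0 with h | h
    · have h2 : xp i = 0 := max_eq_right h
      rw [h2, mul_zero]
    · have h2 : xm i = 0 := max_eq_right (by linarith)
      rw [h2, zero_mul]
  have hsub : ∀ i, x i = xp i - xm i := by
    intro i
    rcases le_total (x i) 0 with h | h
    · rw [show xp i = 0 from max_eq_right h, show xm i = -x i from max_eq_left (by linarith)]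
      ring
    · rw [show xp i = x i from max_eq_left h, show xm i = 0 from max_eq_right (by linarith)]
      ring
  have key1 : xm ⬝ᵥ A *ᵥ xp ≤ 0 := by
    simp only [dotProduct, Matrix.mulVec]
    apply Finset.sum_nonpos
    intro i _
    rw [Finset.mul_sum]
    apply Finset.sum_nonpos
    intro j _
    rcases eq_or_ne i j with rfl | hij
    · have h0 : xm i * (A i i * xp i) = 0 := by
        rw [show xm i * (A i i * xp i) = A i i * (xm i * xp i) from by ring, hmp i, mul_zero]
      exact le_of_eq h0
    · have h1 := hoff i j hij
      have h2 : 0 ≤ xm i * xp j := mul_nonneg (hxm0 i) (hxp0 j)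
      nlinarith
  have key2 : 0 ≤ xm ⬝ᵥ c := by
    simp only [dotProduct]
    exact Finset.sum_nonneg fun i _ => mul_nonneg (hxm0 i) (hc i)
  have hxv : A *ᵥ x = A *ᵥ xp - A *ᵥ xm := by
    have hxe : x = xp - xm := by ext i; simpa using hsub i
    rw [hxe, Matrix.mulVec_sub]
  have hsplit : xm ⬝ᵥ A *ᵥ xm ≤ 0 := by
    have h1 : xm ⬝ᵥ A *ᵥ x = xm ⬝ᵥ c := by rw [hx]
    rw [hxv, dotProduct_sub] at h1
    linarith
  have hsemi : 0 ≤ xm ⬝ᵥ A *ᵥ xm := by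
    have := hA.posSemidef.dotProduct_mulVec_nonneg xm
    simpa using this
  have hzero : xm = 0 := by
    by_contra hne
    have := hA.dotProduct_mulVec_pos hne
    simp only [star_trivial] at this
    linarith
  intro i
  have h1 : xm i = 0 := by rw [hzero]; rfl
  have h2 : -x i ≤ 0 := by rw [← h1]; exact le_max_left _ _
  linarith

lemma aux_inv_nonneg {A : Matrix n n ℝ} (hA : A.PosDef)
    (hoff : ∀ i j, i ≠ j → A i j ≤ 0) : ∀ i j, 0 ≤ A⁻¹ i j := by
  intro i j
  have hdet : IsUnit A.det := hA.det_pos.ne'.isUnit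
  have hx : A *ᵥ (fun k => A⁻¹ k j) = fun k => (1 : Matrix n n ℝ) k j := by
    ext k
    simp only [Matrix.mulVec, dotProduct]
    rw [← Matrix.mul_apply, Matrix.mul_nonsing_inv A hdet]
  refine aux_mmatrix_nonneg hA hoff (fun k => ?_) hx i
  by_cases h : k = j <;> simp [Matrix.one_apply, h]

lemma aux_dot_mulVec_symm (M : Matrix m n ℝ) (N : Matrix n m ℝ) (h : Mᵀ = N)
    (u : m → ℝ) (v : n → ℝ) : u ⬝ᵥ M *ᵥ v = v ⬝ᵥ N *ᵥ u := by
  subst h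
  rw [Matrix.dotProduct_mulVec, Matrix.mulVec_transpose, dotProduct_comm]

/-- The canonical equivalence `U ⊕ Uᶜ ≃ V`. -/
def sumComplEquiv {V : Type*} [Fintype V] [DecidableEq V] (U : Finset V) :
    {x : V // x ∈ U} ⊕ {x : V // x ∈ Uᶜ} ≃ V where
  toFun := Sum.elim Subtype.val Subtype.val
  invFun x := if h : x ∈ U then Sum.inl ⟨x, h⟩ else Sum.inr ⟨x, Finset.mem_compl.mpr h⟩
  left_inv := by
    rintro (⟨x, hx⟩ | ⟨x, hx⟩)
    · simp [hx]
    · simp [Finset.mem_compl.mp hx]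
  right_inv x := by by_cases h : x ∈ U <;> simp [h]

@[simp] lemma sumComplEquiv_inl {V : Type*} [Fintype V] [DecidableEq V] (U : Finset V)
    (i : {x : V // x ∈ U}) : sumComplEquiv U (Sum.inl i) = ↑i := rfl

@[simp] lemma sumComplEquiv_inr {V : Type*} [Fintype V] [DecidableEq V] (U : Finset V)
    (i : {x : V // x ∈ Uᶜ}) : sumComplEquiv U (Sum.inr i) = ↑i := rfl

end Aux

set_option maxHeartbeats 2000000 in
/-- Schur-complement factorization of the density of `ν_V^{W,η}`:
with `Ĝ^U = ((H_β)_{U,U})⁻¹`, `η̂ = η_U + W_{U,U^c} 1`, `W̌ = W_{U^c,U^c} + W_{U^c,U} Ĝ^U W_{U,U^c}`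
and `η̌ = η_{U^c} + W_{U^c,U} Ĝ^U η_U`, the matrix `W̌` is symmetric with nonnegative entries,
`η̌` is nonnegative, `H_β` is positive definite iff both `(H_β)_{U,U}` and `2 diag(β_{U^c}) − W̌`
are, and `f_{ν_V^{W,η}}(β) = f_{ν_U^{W_{U,U},η̂}}(β_U) · f_{ν_{U^c}^{W̌,η̌}}(β_{U^c})`. -/
theorem stmt3 {V : Type*} [Fintype V] [DecidableEq V] [Nonempty V]
    (W : Matrix V V ℝ) (hWsymm : W.IsSymm) (hWpos : ∀ i j, 0 ≤ W i j)
    (η : V → ℝ) (hη : ∀ i, 0 ≤ η i) (U : Finset V) (β : V → ℝ)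
    (hUpd : ((Hmat W β).submatrix (Subtype.val : {x : V // x ∈ U} → V) Subtype.val).PosDef)
    (Ghat : Matrix {x : V // x ∈ U} {x : V // x ∈ U} ℝ)
    (hGhat : Ghat = ((Hmat W β).submatrix (Subtype.val : {x : V // x ∈ U} → V) Subtype.val)⁻¹)
    (ηhat : {x : V // x ∈ U} → ℝ)
    (hηhat : ∀ i : {x : V // x ∈ U}, ηhat i = η ↑i + ∑ j ∈ Uᶜ, W ↑i j)
    (Wcheck : Matrix {x : V // x ∈ Uᶜ} {x : V // x ∈ Uᶜ} ℝ)
    (hWcheck : Wcheck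
      = W.submatrix (Subtype.val : {x : V // x ∈ Uᶜ} → V) Subtype.val
        + (W.submatrix (Subtype.val : {x : V // x ∈ Uᶜ} → V)
              (Subtype.val : {x : V // x ∈ U} → V))
          * Ghat
          * (W.submatrix (Subtype.val : {x : V // x ∈ U} → V)
              (Subtype.val : {x : V // x ∈ Uᶜ} → V)))
    (ηcheck : {x : V // x ∈ Uᶜ} → ℝ)
    (hηcheck : ∀ i : {x : V // x ∈ Uᶜ}, ηcheck i
      = η ↑i + ((W.submatrix (Subtype.val : {x : V // x ∈ Uᶜ} → V)
            (Subtype.val : {x : V // x ∈ U} → V)).mulVec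
            (Ghat.mulVec (fun j : {x : V // x ∈ U} => η ↑j))) i) :
    (∀ i j, Wcheck i j = Wcheck j i) ∧ (∀ i j, 0 ≤ Wcheck i j) ∧ (∀ i, 0 ≤ ηcheck i) ∧
    ((Hmat W β).PosDef ↔
      (((Hmat W β).submatrix (Subtype.val : {x : V // x ∈ U} → V) Subtype.val).PosDef ∧
        (Hmat Wcheck (fun i : {x : V // x ∈ Uᶜ} => β ↑i)).PosDef)) ∧
    densEta W η β
      = densEta (W.submatrix (Subtype.val : {x : V // x ∈ U} → V) Subtype.val) ηhat
          (fun i : {x : V // x ∈ U} => β ↑i)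
        * densEta Wcheck ηcheck (fun i : {x : V // x ∈ Uᶜ} => β ↑i) := by
  classical
  set A := (Hmat W β).submatrix (Subtype.val : {x : V // x ∈ U} → V) Subtype.val with hA_def
  set Wuu := W.submatrix (Subtype.val : {x : V // x ∈ U} → V)
      (Subtype.val : {x : V // x ∈ U} → V) with hWuu_def
  set Wuc := W.submatrix (Subtype.val : {x : V // x ∈ U} → V)
      (Subtype.val : {x : V // x ∈ Uᶜ} → V) with hWuc_def
  set Wcu := W.submatrix (Subtype.val : {x : V // x ∈ Uᶜ} → V)
      (Subtype.val : {x : V // x ∈ U} → V) with hWcu_def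
  set Wcc := W.submatrix (Subtype.val : {x : V // x ∈ Uᶜ} → V)
      (Subtype.val : {x : V // x ∈ Uᶜ} → V) with hWcc_def
  set DD := (Hmat W β).submatrix (Subtype.val : {x : V // x ∈ Uᶜ} → V)
      (Subtype.val : {x : V // x ∈ Uᶜ} → V) with hDD_def
  set B := (Hmat W β).submatrix (Subtype.val : {x : V // x ∈ U} → V)
      (Subtype.val : {x : V // x ∈ Uᶜ} → V) with hB_def
  set SS := Hmat Wcheck (fun i : {x : V // x ∈ Uᶜ} => β ↑i) with hSS_def
  -- basic symmetry facts
  have hWentry : ∀ a b : V, W a b = W b a := fun a b => (congrFun (congrFun hWsymm a) b).symm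
  have hHsymmT : (Hmat W β)ᵀ = Hmat W β := by
    simp only [Hmat]
    rw [Matrix.transpose_sub, Matrix.diagonal_transpose, hWsymm]
  have hHsymm : ∀ a b : V, Hmat W β a b = Hmat W β b a :=
    fun a b => congrFun (congrFun hHsymmT.symm a) b
  have hoffH : ∀ a b : V, a ≠ b → Hmat W β a b = - W a b := by
    intro a b hab
    simp only [Hmat, Matrix.sub_apply, Matrix.diagonal_apply_ne _ hab]
    ring
  have hWucT : Wucᵀ = Wcu := by
    rw [hWuc_def, hWcu_def, Matrix.transpose_submatrix, hWsymm]
  have hWcuT : Wcuᵀ = Wuc := by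
    rw [hWcu_def, hWuc_def, Matrix.transpose_submatrix, hWsymm]
  have hWccT : Wccᵀ = Wcc := by
    rw [hWcc_def, Matrix.transpose_submatrix, hWsymm]
  have hAT : Aᵀ = A := by
    rw [hA_def, Matrix.transpose_submatrix, hHsymmT]
  -- facts about A and Ghat
  have hoffA : ∀ i j : {x : V // x ∈ U}, i ≠ j → A i j ≤ 0 := by
    intro i j hij
    have hne : (i : V) ≠ (j : V) := fun h => hij (Subtype.ext h)
    rw [hA_def]
    simp only [Matrix.submatrix_apply]
    rw [hoffH _ _ hne]
    linarith [hWpos (i : V) (j : V)]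
  have hdetA : IsUnit A.det := hUpd.det_pos.ne'.isUnit
  haveI : Invertible A := A.invertibleOfIsUnitDet hdetA
  have hGnn : ∀ i j, 0 ≤ Ghat i j := by
    intro i j
    rw [hGhat]
    exact aux_inv_nonneg hUpd hoffA i j
  have hGT : Ghatᵀ = Ghat := by rw [hGhat, Matrix.transpose_nonsing_inv, hAT]
  have hAG : A * Ghat = 1 := by rw [hGhat]; exact Matrix.mul_nonsing_inv _ hdetA
  have hAGv : ∀ z : {x : V // x ∈ U} → ℝ, A *ᵥ (Ghat *ᵥ z) = z := by
    intro z
    rw [Matrix.mulVec_mulVec, hAG, Matrix.one_mulVec]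
  -- part 1 : symmetry of Wcheck
  have hWcheckT : Wcheckᵀ = Wcheck := by
    rw [hWcheck, Matrix.transpose_add, Matrix.transpose_mul, Matrix.transpose_mul, hGT,
      hWucT, hWcuT, hWccT, ← Matrix.mul_assoc]
  have part1 : ∀ i j, Wcheck i j = Wcheck j i :=
    fun i j => congrFun (congrFun hWcheckT.symm i) j
  -- part 2 : nonnegativity of Wcheck
  have part2 : ∀ i j, 0 ≤ Wcheck i j := by
    intro i j
    have h1 : 0 ≤ (Wcu * Ghat * Wuc) i j := by
      rw [Matrix.mul_apply]
      refine Finset.sum_nonneg fun k _ => ?_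
      refine mul_nonneg ?_ ?_
      · rw [Matrix.mul_apply]
        refine Finset.sum_nonneg fun l _ => ?_
        refine mul_nonneg ?_ (hGnn _ _)
        rw [hWcu_def]
        exact hWpos _ _
      · rw [hWuc_def]
        exact hWpos _ _
    rw [hWcheck, Matrix.add_apply]
    refine add_nonneg ?_ h1
    rw [hWcc_def]
    exact hWpos _ _
  -- part 3 : nonnegativity of ηcheck
  have part3 : ∀ i, 0 ≤ ηcheck i := by
    intro i
    rw [hηcheck i]
    refine add_nonneg (hη _) ?_
    simp only [Matrix.mulVec, dotProduct]
    refine Finset.sum_nonneg fun k _ => ?_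
    refine mul_nonneg ?_ ?_
    · rw [hWcu_def]; exact hWpos _ _
    · refine Finset.sum_nonneg fun l _ => ?_
      exact mul_nonneg (hGnn _ _) (hη _)
  -- block decomposition
  have hBneg : B = -Wuc := by
    rw [hB_def, hWuc_def]
    ext i j
    have hne : (i : V) ≠ ↑j := fun h => (Finset.mem_compl.mp j.2) (h ▸ i.2)
    simp only [Matrix.submatrix_apply, Matrix.neg_apply]
    exact hoffH _ _ hne
  have hWucH : Wucᴴ = Wcu := by
    rw [hWuc_def, hWcu_def]
    ext i j
    simp only [Matrix.conjTranspose_apply, Matrix.submatrix_apply, star_trivial]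
    exact hWentry _ _
  have hBHneg : Bᴴ = -Wcu := by rw [hBneg, Matrix.conjTranspose_neg, hWucH]
  have hM : (Hmat W β).submatrix ⇑(sumComplEquiv U) ⇑(sumComplEquiv U)
      = Matrix.fromBlocks A B Bᴴ DD := by
    rw [hBHneg, hA_def, hB_def, hDD_def, hWcu_def]
    ext s t
    rcases s with i | i <;> rcases t with j | j
    · rfl
    · rfl
    · have hne : (i : V) ≠ ↑j := fun h => (Finset.mem_compl.mp i.2) (h ▸ j.2)
      simp only [Matrix.submatrix_apply, sumComplEquiv_inl, sumComplEquiv_inr,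
        Matrix.fromBlocks_apply₂₁, Matrix.neg_apply]
      rw [hoffH _ _ hne, hWentry]
    · rfl
  have hDDeq2 : DD = Hmat Wcc (fun i : {x : V // x ∈ Uᶜ} => β ↑i) := by
    rw [hDD_def, hWcc_def]
    ext i j
    simp only [Hmat, Matrix.sub_apply, Matrix.submatrix_apply]
    rcases eq_or_ne i j with rfl | hne
    · simp
    · rw [Matrix.diagonal_apply_ne _ (fun h : (i : V) = ↑j => hne (Subtype.ext h)),
        Matrix.diagonal_apply_ne _ hne]
  have hSchur : DD - Bᴴ * A⁻¹ * B = SS := by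
    rw [hBHneg, hBneg, ← hGhat, hDDeq2, hSS_def, hWcheck]
    simp only [Hmat, Matrix.neg_mul, Matrix.mul_neg, neg_neg, sub_sub]
  have hdetM : ((Hmat W β).submatrix ⇑(sumComplEquiv U) ⇑(sumComplEquiv U)).det
      = A.det * SS.det := by
    rw [hM, Matrix.det_fromBlocks₁₁, Matrix.invOf_eq_nonsing_inv, hSchur]
  have hdetH : (Hmat W β).det = A.det * SS.det := by
    rw [← Matrix.det_submatrix_equiv_self (sumComplEquiv U) (Hmat W β)]
    exact hdetM
  have hiff : (Hmat W β).PosDef ↔ SS.PosDef := by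
    have hfb := Matrix.PosDef.fromBlocks₁₁ (A := A) B DD hUpd
    rw [hSchur] at hfb
    constructor
    · intro h
      have hMpd := aux_posDef_submatrix h (sumComplEquiv U)
      have hsemi : SS.PosSemidef := hfb.mp (by rw [← hM]; exact hMpd.posSemidef)
      have hdSS : SS.det ≠ 0 := by
        intro h0
        have hd := h.det_pos
        rw [hdetH, h0, mul_zero] at hd
        exact lt_irrefl 0 hd
      exact aux_posDef_of_posSemidef hsemi hdSS.isUnit
    · intro hs
      have hMsemi : ((Hmat W β).submatrix ⇑(sumComplEquiv U) ⇑(sumComplEquiv U)).PosSemidef := by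
        rw [hM]; exact hfb.mpr hs.posSemidef
      have hMdet : IsUnit ((Hmat W β).submatrix ⇑(sumComplEquiv U) ⇑(sumComplEquiv U)).det := by
        rw [Matrix.det_submatrix_equiv_self, hdetH]
        exact (mul_pos hUpd.det_pos hs.det_pos).ne'.isUnit
      exact (aux_posDef_submatrix_iff (sumComplEquiv U)).mp
        (aux_posDef_of_posSemidef hMsemi hMdet)
  have part4 : (Hmat W β).PosDef ↔ (A.PosDef ∧ SS.PosDef) :=
    ⟨fun h => ⟨hUpd, hiff.mp h⟩, fun h => hiff.mpr h.2⟩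
  -- the U-block of H as an Hmat
  have hHU : Hmat Wuu (fun i : {x : V // x ∈ U} => β ↑i) = A := by
    rw [hA_def, hWuu_def]
    ext i j
    simp only [Hmat, Matrix.sub_apply, Matrix.submatrix_apply]
    rcases eq_or_ne i j with rfl | hne
    · simp
    · rw [Matrix.diagonal_apply_ne _ hne,
        Matrix.diagonal_apply_ne _ (fun h : (i : V) = ↑j => hne (Subtype.ext h))]
  -- vector identities
  have h1U : ((1 : V → ℝ) ∘ ⇑(sumComplEquiv U))
      = Sum.elim (1 : {x : V // x ∈ U} → ℝ) (1 : {x : V // x ∈ Uᶜ} → ℝ) := by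
    funext s; rcases s with i | i <;> rfl
  have hηe : (η ∘ ⇑(sumComplEquiv U))
      = Sum.elim (fun i : {x : V // x ∈ U} => η ↑i) (fun i : {x : V // x ∈ Uᶜ} => η ↑i) := by
    funext s; rcases s with i | i <;> rfl
  have hb : ∀ i : {x : V // x ∈ U}, (Wuc *ᵥ (1 : {x : V // x ∈ Uᶜ} → ℝ)) i
      = ∑ j ∈ Uᶜ, W ↑i j := by
    intro i
    rw [hWuc_def]
    simp only [Matrix.mulVec, dotProduct, Matrix.submatrix_apply, Pi.one_apply, mul_one]
    exact Finset.sum_coe_sort Uᶜ (fun j => W ↑i j)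
  have hηhatf : ηhat = (fun i : {x : V // x ∈ U} => η ↑i)
      + Wuc *ᵥ (1 : {x : V // x ∈ Uᶜ} → ℝ) := by
    funext i
    rw [hηhat i, Pi.add_apply, hb i]
  have hvf : ηcheck = (fun i : {x : V // x ∈ Uᶜ} => η ↑i)
      + Wcu *ᵥ (Ghat *ᵥ (fun j : {x : V // x ∈ U} => η ↑j)) := by
    funext i
    rw [hηcheck i, Pi.add_apply]
  -- scalar identities
  have hT1 : (1 : V → ℝ) ⬝ᵥ (Hmat W β) *ᵥ (1 : V → ℝ)
      = (1 : {x : V // x ∈ U} → ℝ) ⬝ᵥ A *ᵥ (1 : {x : V // x ∈ U} → ℝ)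
        + (1 : {x : V // x ∈ Uᶜ} → ℝ) ⬝ᵥ DD *ᵥ (1 : {x : V // x ∈ Uᶜ} → ℝ)
        - 2 * ((1 : {x : V // x ∈ U} → ℝ) ⬝ᵥ Wuc *ᵥ (1 : {x : V // x ∈ Uᶜ} → ℝ)) := by
    rw [← aux_dot_transfer (sumComplEquiv U) (Hmat W β) 1 1, h1U, hM,
      Matrix.fromBlocks_mulVec]
    simp only [Sum.elim_comp_inl, Sum.elim_comp_inr]
    rw [sumElim_dotProduct_sumElim, hBHneg, hBneg]
    simp only [Matrix.neg_mulVec, dotProduct_add, dotProduct_neg]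
    rw [aux_dot_mulVec_symm Wcu Wuc hWcuT (1 : {x : V // x ∈ Uᶜ} → ℝ)
      (1 : {x : V // x ∈ U} → ℝ)]
    ring
  have hT3 : η ⬝ᵥ (1 : V → ℝ)
      = (fun i : {x : V // x ∈ U} => η ↑i) ⬝ᵥ (1 : {x : V // x ∈ U} → ℝ)
        + (fun i : {x : V // x ∈ Uᶜ} => η ↑i) ⬝ᵥ (1 : {x : V // x ∈ Uᶜ} → ℝ) := by
    rw [← aux_dot_comp (sumComplEquiv U) η 1, hηe, h1U, sumElim_dotProduct_sumElim]
  have hs2 : ηhat ⬝ᵥ Ghat *ᵥ ηhat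
      = (fun i : {x : V // x ∈ U} => η ↑i) ⬝ᵥ Ghat *ᵥ (fun i : {x : V // x ∈ U} => η ↑i)
        + 2 * ((Wuc *ᵥ (1 : {x : V // x ∈ Uᶜ} → ℝ)) ⬝ᵥ Ghat *ᵥ
            (fun i : {x : V // x ∈ U} => η ↑i))
        + (Wuc *ᵥ (1 : {x : V // x ∈ Uᶜ} → ℝ)) ⬝ᵥ Ghat *ᵥ
            (Wuc *ᵥ (1 : {x : V // x ∈ Uᶜ} → ℝ)) := by
    rw [hηhatf, Matrix.mulVec_add, add_dotProduct, dotProduct_add,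
      dotProduct_add,
      aux_dot_mulVec_symm Ghat Ghat hGT (fun i : {x : V // x ∈ U} => η ↑i)
        (Wuc *ᵥ (1 : {x : V // x ∈ Uᶜ} → ℝ))]
    ring
  have hs3 : ηhat ⬝ᵥ (1 : {x : V // x ∈ U} → ℝ)
      = (fun i : {x : V // x ∈ U} => η ↑i) ⬝ᵥ (1 : {x : V // x ∈ U} → ℝ)
        + (1 : {x : V // x ∈ U} → ℝ) ⬝ᵥ Wuc *ᵥ (1 : {x : V // x ∈ Uᶜ} → ℝ) := by
    rw [hηhatf, add_dotProduct,
      dotProduct_comm (Wuc *ᵥ (1 : {x : V // x ∈ Uᶜ} → ℝ))]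
  have hSSeq : SS = DD - Wcu * Ghat * Wuc := by
    rw [← hSchur, hBHneg, hBneg, ← hGhat]
    simp only [Matrix.neg_mul, Matrix.mul_neg, neg_neg]
  have ht1 : (1 : {x : V // x ∈ Uᶜ} → ℝ) ⬝ᵥ SS *ᵥ (1 : {x : V // x ∈ Uᶜ} → ℝ)
      = (1 : {x : V // x ∈ Uᶜ} → ℝ) ⬝ᵥ DD *ᵥ (1 : {x : V // x ∈ Uᶜ} → ℝ)
        - (Wuc *ᵥ (1 : {x : V // x ∈ Uᶜ} → ℝ)) ⬝ᵥ Ghat *ᵥ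
            (Wuc *ᵥ (1 : {x : V // x ∈ Uᶜ} → ℝ)) := by
    rw [hSSeq, Matrix.sub_mulVec, dotProduct_sub]
    congr 1
    rw [← Matrix.mulVec_mulVec, ← Matrix.mulVec_mulVec,
      aux_dot_mulVec_symm Wcu Wuc hWcuT (1 : {x : V // x ∈ Uᶜ} → ℝ)
        (Ghat *ᵥ (Wuc *ᵥ (1 : {x : V // x ∈ Uᶜ} → ℝ))),
      dotProduct_comm (Ghat *ᵥ (Wuc *ᵥ (1 : {x : V // x ∈ Uᶜ} → ℝ)))
        (Wuc *ᵥ (1 : {x : V // x ∈ Uᶜ} → ℝ))]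
  have ht3 : ηcheck ⬝ᵥ (1 : {x : V // x ∈ Uᶜ} → ℝ)
      = (fun i : {x : V // x ∈ Uᶜ} => η ↑i) ⬝ᵥ (1 : {x : V // x ∈ Uᶜ} → ℝ)
        + (Wuc *ᵥ (1 : {x : V // x ∈ Uᶜ} → ℝ)) ⬝ᵥ Ghat *ᵥ
            (fun i : {x : V // x ∈ U} => η ↑i) := by
    rw [hvf, add_dotProduct]
    congr 1
    calc (Wcu *ᵥ (Ghat *ᵥ (fun j : {x : V // x ∈ U} => η ↑j))) ⬝ᵥ (1 : {x : V // x ∈ Uᶜ} → ℝ)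
        = (1 : {x : V // x ∈ Uᶜ} → ℝ) ⬝ᵥ Wcu *ᵥ (Ghat *ᵥ (fun j : {x : V // x ∈ U} => η ↑j)) :=
          dotProduct_comm _ _
      _ = (Ghat *ᵥ (fun j : {x : V // x ∈ U} => η ↑j)) ⬝ᵥ Wuc *ᵥ (1 : {x : V // x ∈ Uᶜ} → ℝ) :=
          aux_dot_mulVec_symm Wcu Wuc hWcuT _ _
      _ = (Wuc *ᵥ (1 : {x : V // x ∈ Uᶜ} → ℝ)) ⬝ᵥ Ghat *ᵥ (fun j : {x : V // x ∈ U} => η ↑j) :=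
          dotProduct_comm _ _
  -- the density factorization
  have hP : (2 / Real.pi) ^ ((Fintype.card V : ℝ) / 2)
      = (2 / Real.pi) ^ ((Fintype.card {x : V // x ∈ U} : ℝ) / 2)
        * (2 / Real.pi) ^ ((Fintype.card {x : V // x ∈ Uᶜ} : ℝ) / 2) := by
    have h2pi : (0 : ℝ) < 2 / Real.pi := by positivity
    have hcard : (Fintype.card V : ℝ)
        = (Fintype.card {x : V // x ∈ U} : ℝ) + (Fintype.card {x : V // x ∈ Uᶜ} : ℝ) := by
      rw [Fintype.card_coe, Fintype.card_coe, ← Finset.card_add_card_compl U]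
      push_cast
      ring
    rw [hcard, add_div, Real.rpow_add h2pi]
  have part5 : densEta W η β = densEta Wuu ηhat (fun i : {x : V // x ∈ U} => β ↑i)
      * densEta Wcheck ηcheck (fun i : {x : V // x ∈ Uᶜ} => β ↑i) := by
    by_cases hH : (Hmat W β).PosDef
    · have hSpd : SS.PosDef := hiff.mp hH
      have hdetSS : IsUnit SS.det := hSpd.det_pos.ne'.isUnit
      have hSy : SS *ᵥ (SS⁻¹ *ᵥ ηcheck) = ηcheck := by
        rw [Matrix.mulVec_mulVec, Matrix.mul_nonsing_inv _ hdetSS, Matrix.one_mulVec]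
      have hMx : ((Hmat W β).submatrix ⇑(sumComplEquiv U) ⇑(sumComplEquiv U)) *ᵥ
          (Sum.elim
            (Ghat *ᵥ (fun i : {x : V // x ∈ U} => η ↑i)
              + Ghat *ᵥ (Wuc *ᵥ (SS⁻¹ *ᵥ ηcheck)))
            (SS⁻¹ *ᵥ ηcheck))
          = Sum.elim (fun i : {x : V // x ∈ U} => η ↑i) (fun i : {x : V // x ∈ Uᶜ} => η ↑i) := by
        have hDDy : DD *ᵥ (SS⁻¹ *ᵥ ηcheck)
            = ηcheck + Wcu *ᵥ (Ghat *ᵥ (Wuc *ᵥ (SS⁻¹ *ᵥ ηcheck))) := by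
          have hDDeq : DD = SS + Wcu * Ghat * Wuc := by
            rw [hSSeq]; abel
          rw [hDDeq, Matrix.add_mulVec, hSy]
          simp only [← Matrix.mulVec_mulVec]
        have htop : A *ᵥ (Ghat *ᵥ (fun i : {x : V // x ∈ U} => η ↑i)
              + Ghat *ᵥ (Wuc *ᵥ (SS⁻¹ *ᵥ ηcheck))) + B *ᵥ (SS⁻¹ *ᵥ ηcheck)
            = (fun i : {x : V // x ∈ U} => η ↑i) := by
          rw [Matrix.mulVec_add, hAGv, hAGv, hBneg, Matrix.neg_mulVec]
          abel
        have hbot : Bᴴ *ᵥ (Ghat *ᵥ (fun i : {x : V // x ∈ U} => η ↑i)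
              + Ghat *ᵥ (Wuc *ᵥ (SS⁻¹ *ᵥ ηcheck))) + DD *ᵥ (SS⁻¹ *ᵥ ηcheck)
            = (fun i : {x : V // x ∈ Uᶜ} => η ↑i) := by
          rw [hBHneg, Matrix.neg_mulVec, Matrix.mulVec_add, hDDy, hvf]
          abel
        rw [hM, Matrix.fromBlocks_mulVec]
        simp only [Sum.elim_comp_inl, Sum.elim_comp_inr]
        rw [htop, hbot]
      have hMdet' : IsUnit ((Hmat W β).submatrix ⇑(sumComplEquiv U) ⇑(sumComplEquiv U)).det := by
        rw [Matrix.det_submatrix_equiv_self]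
        exact hH.det_pos.ne'.isUnit
      have hxinv : ((Hmat W β).submatrix ⇑(sumComplEquiv U) ⇑(sumComplEquiv U))⁻¹ *ᵥ
          Sum.elim (fun i : {x : V // x ∈ U} => η ↑i) (fun i : {x : V // x ∈ Uᶜ} => η ↑i)
          = Sum.elim
            (Ghat *ᵥ (fun i : {x : V // x ∈ U} => η ↑i)
              + Ghat *ᵥ (Wuc *ᵥ (SS⁻¹ *ᵥ ηcheck)))
            (SS⁻¹ *ᵥ ηcheck) := by
        rw [← hMx, Matrix.mulVec_mulVec, Matrix.nonsing_inv_mul _ hMdet', Matrix.one_mulVec]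
      have hcross : (fun i : {x : V // x ∈ U} => η ↑i) ⬝ᵥ Ghat *ᵥ (Wuc *ᵥ (SS⁻¹ *ᵥ ηcheck))
          = (Wcu *ᵥ (Ghat *ᵥ (fun j : {x : V // x ∈ U} => η ↑j))) ⬝ᵥ (SS⁻¹ *ᵥ ηcheck) := by
        calc (fun i : {x : V // x ∈ U} => η ↑i) ⬝ᵥ Ghat *ᵥ (Wuc *ᵥ (SS⁻¹ *ᵥ ηcheck))
            = (Wuc *ᵥ (SS⁻¹ *ᵥ ηcheck)) ⬝ᵥ Ghat *ᵥ (fun i : {x : V // x ∈ U} => η ↑i) :=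
              aux_dot_mulVec_symm Ghat Ghat hGT _ _
          _ = (Ghat *ᵥ (fun j : {x : V // x ∈ U} => η ↑j)) ⬝ᵥ (Wuc *ᵥ (SS⁻¹ *ᵥ ηcheck)) :=
              dotProduct_comm _ _
          _ = (SS⁻¹ *ᵥ ηcheck) ⬝ᵥ Wcu *ᵥ (Ghat *ᵥ (fun j : {x : V // x ∈ U} => η ↑j)) :=
              aux_dot_mulVec_symm Wuc Wcu hWucT _ _
          _ = (Wcu *ᵥ (Ghat *ᵥ (fun j : {x : V // x ∈ U} => η ↑j))) ⬝ᵥ (SS⁻¹ *ᵥ ηcheck) :=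
              dotProduct_comm _ _
      have hT2 : η ⬝ᵥ (Hmat W β)⁻¹ *ᵥ η
          = (fun i : {x : V // x ∈ U} => η ↑i) ⬝ᵥ Ghat *ᵥ (fun i : {x : V // x ∈ U} => η ↑i)
            + ηcheck ⬝ᵥ SS⁻¹ *ᵥ ηcheck := by
        rw [← aux_dot_transfer (sumComplEquiv U) (Hmat W β)⁻¹ η η, hηe,
          ← Matrix.inv_submatrix_equiv (Hmat W β) (sumComplEquiv U) (sumComplEquiv U),
          hxinv, sumElim_dotProduct_sumElim, dotProduct_add, hcross]
        nth_rewrite 3 [hvf]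
        rw [add_dotProduct]
        ring
      have hdetfac : (Hmat W β).det ^ (-(1/2) : ℝ)
          = A.det ^ (-(1/2) : ℝ) * SS.det ^ (-(1/2) : ℝ) := by
        rw [hdetH, Real.mul_rpow (le_of_lt hUpd.det_pos) (le_of_lt hSpd.det_pos)]
      have hE : -(1/2) * ((1 : V → ℝ) ⬝ᵥ (Hmat W β) *ᵥ (1 : V → ℝ))
            - (1/2) * (η ⬝ᵥ (Hmat W β)⁻¹ *ᵥ η) + η ⬝ᵥ (1 : V → ℝ)
          = (-(1/2) * ((1 : {x : V // x ∈ U} → ℝ) ⬝ᵥ A *ᵥ (1 : {x : V // x ∈ U} → ℝ))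
              - (1/2) * (ηhat ⬝ᵥ Ghat *ᵥ ηhat) + ηhat ⬝ᵥ (1 : {x : V // x ∈ U} → ℝ))
            + (-(1/2) * ((1 : {x : V // x ∈ Uᶜ} → ℝ) ⬝ᵥ SS *ᵥ (1 : {x : V // x ∈ Uᶜ} → ℝ))
              - (1/2) * (ηcheck ⬝ᵥ SS⁻¹ *ᵥ ηcheck)
              + ηcheck ⬝ᵥ (1 : {x : V // x ∈ Uᶜ} → ℝ)) := by
        rw [hT1, hT2, hT3, hs2, hs3, ht1, ht3]
        ring
      simp only [densEta]
      rw [hHU, ← hSS_def, if_pos hH, if_pos hUpd, if_pos hSpd, ← hGhat, hP, hE,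
        Real.exp_add, hdetfac]
      ring
    · have hSn : ¬ SS.PosDef := fun hs => hH (hiff.mpr hs)
      simp only [densEta]
      rw [← hSS_def, if_neg hH, if_neg hSn]
      ring
  exact ⟨part1, part2, part3, part4, part5⟩
end

section
/- Let V be finite, W symmetric with nonnegative entries and zero diagonal, and β ∈ ℝ^V such that H_β = 2·diag(β) − W is positive definite; let G = (H_β)^{−1}. Let 𝒫̄_{j,i} be the set of paths σ = (σ_0 = j, …, σ_m = i) from j to i with σ_k ≠ i for 0 ≤ k ≤ m−1. Then for all i,j ∈ V, the family (W_σ/(2β)^−_σ)_{σ∈𝒫̄_{j,i}} is summable and Σ_{σ∈𝒫̄_{j,i}} W_σ/(2β)^−_σ = G(i,j)/G(i,i). -/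
open Matrix

/-- Weight `W_σ = Π_{k} W_{σ_k,σ_{k+1}}` of a path given as a list of vertices. -/
noncomputable def wWeight {V : Type*} (W : Matrix V V ℝ) (l : List V) : ℝ :=
  ((l.zip l.tail).map (fun p => W p.1 p.2)).prod

/-- `(2β)^−_σ = Π_{k=0}^{m−1} 2 β_{σ_k}` (all vertices but the last one). -/
noncomputable def twoBetaMinus {V : Type*} (β : V → ℝ) (l : List V) : ℝ :=
  (l.dropLast.map (fun k => 2 * β k)).prod

/-- `l` is a path from `j` to `i` for the adjacency relation `A`, hitting `i` only at its
last vertex (`σ_k ≠ i` for `0 ≤ k ≤ m−1`). -/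
def IsStoppedWalkList {V : Type*} (A : V → V → Prop) (j i : V) (l : List V) : Prop :=
  l ≠ [] ∧ l.head? = some j ∧ l.getLast? = some i ∧ l.Chain' A ∧ ∀ x ∈ l.dropLast, x ≠ i

set_option linter.unusedSectionVars false
set_option maxHeartbeats 1000000

namespace Stmt9Aux

variable {V : Type*} [Fintype V] [DecidableEq V]

/-- The transition weight matrix `M = D⁻¹ W`. -/
noncomputable def Mmat (W : Matrix V V ℝ) (β : V → ℝ) : Matrix V V ℝ :=
  Matrix.of fun a b => W a b / (2 * β a)

/-- Total weight of a walk. -/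
noncomputable def walkWt (W : Matrix V V ℝ) (β : V → ℝ) (l : List V) : ℝ :=
  wWeight W l / twoBetaMinus β l

lemma walkWt_singleton (W : Matrix V V ℝ) (β : V → ℝ) (v : V) :
    walkWt W β [v] = 1 := by
  simp [walkWt, wWeight, twoBetaMinus]

lemma walkWt_cons (W : Matrix V V ℝ) (β : V → ℝ) (v x : V) (t : List V) :
    walkWt W β (v :: x :: t) = Mmat W β v x * walkWt W β (x :: t) := by
  unfold walkWt wWeight twoBetaMinus Mmat
  simp only [List.zip_cons_cons, List.tail_cons, List.map_cons, List.prod_cons,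
    List.dropLast_cons₂, Matrix.of_apply]
  rw [mul_div_mul_comm]

lemma walkWt_nonneg (W : Matrix V V ℝ) (β : V → ℝ) (hW : ∀ a b, 0 ≤ W a b)
    (hβ : ∀ v, 0 ≤ β v) (l : List V) : 0 ≤ walkWt W β l := by
  apply div_nonneg
  · exact List.prod_nonneg (by simp only [List.mem_map]; rintro _ ⟨p, -, rfl⟩; exact hW _ _)
  · refine List.prod_nonneg ?_
    simp only [List.mem_map]
    rintro _ ⟨k, -, rfl⟩
    linarith [hβ k]

/-- sum of walk weights over walks with `m+1` vertices from `a` to `b`. -/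
noncomputable def sliceSum (W : Matrix V V ℝ) (β : V → ℝ) (m : ℕ) (a b : V) : ℝ :=
  ∑ σ : Fin (m + 1) → V,
    if σ 0 = a ∧ σ (Fin.last m) = b then walkWt W β (List.ofFn σ) else 0

lemma ofFn_cons {m : ℕ} (v : V) (τ : Fin (m + 1) → V) :
    List.ofFn (Fin.cons v τ : Fin (m + 2) → V) = v :: List.ofFn τ := by
  rw [List.ofFn_succ]
  simp

lemma sliceSum_eq (W : Matrix V V ℝ) (β : V → ℝ) (m : ℕ) (a b : V) :
    sliceSum W β m a b = (Mmat W β ^ m) a b := by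
  induction m generalizing a with
  | zero =>
    rw [sliceSum, pow_zero]
    rw [Fintype.sum_equiv (Equiv.funUnique (Fin 1) V) _
      (fun v : V => if v = a then (if v = b then (1:ℝ) else 0) else 0) ?_]
    · rw [Finset.sum_ite_eq']
      simp [Matrix.one_apply, eq_comm]
    · intro σ
      have hofn : List.ofFn σ = [σ 0] := by
        rw [List.ofFn_succ]; simp
      have hlast : σ (Fin.last 0) = σ 0 := rfl
      have hd : (default : Fin 1) = 0 := Subsingleton.elim _ _
      simp only [Equiv.funUnique_apply, hofn, hlast, walkWt_singleton, hd]
      rw [ite_and]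
  | succ m ih =>
    rw [sliceSum]
    rw [Fintype.sum_equiv (Fin.consEquiv (fun _ : Fin (m+2) => V)).symm _
      (fun p : V × (Fin (m+1) → V) => if p.1 = a then (if p.2 (Fin.last m) = b then
        Mmat W β a (p.2 0) * walkWt W β (List.ofFn p.2) else 0) else 0) ?_]
    swap
    · intro σ
      show _ = if σ 0 = a then (if Fin.tail σ (Fin.last m) = b then
        Mmat W β a (Fin.tail σ 0) * walkWt W β (List.ofFn (Fin.tail σ)) else 0) else 0
      have h2 : Fin.tail σ (Fin.last m) = σ (Fin.last (m+1)) := by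
        show σ (Fin.last m).succ = _
        rw [Fin.succ_last]
      have h3 : walkWt W β (List.ofFn σ)
          = Mmat W β (σ 0) (Fin.tail σ 0) * walkWt W β (List.ofFn (Fin.tail σ)) := by
        have e1 : List.ofFn (fun i : Fin (m+1) => σ i.succ) = List.ofFn (Fin.tail σ) := rfl
        rw [List.ofFn_succ (f := σ), e1, List.ofFn_succ (f := Fin.tail σ), walkWt_cons, ← List.ofFn_succ]
      rw [h2, h3, ite_and]
      by_cases hv : σ 0 = a
      · subst hv; rfl
      · simp [hv]
    rw [Fintype.sum_prod_type]
    have pull : ∀ v : V, (∑ τ : Fin (m+1) → V, if v = a then (if τ (Fin.last m) = b then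
            Mmat W β a (τ 0) * walkWt W β (List.ofFn τ) else 0) else 0)
        = if v = a then (∑ τ : Fin (m+1) → V, if τ (Fin.last m) = b then
            Mmat W β a (τ 0) * walkWt W β (List.ofFn τ) else 0) else 0 := by
      intro v; split <;> simp
    rw [Finset.sum_congr rfl (fun v _ => pull v), Finset.sum_ite_eq']
    simp only [Finset.mem_univ, if_true]
    rw [pow_succ', Matrix.mul_apply]
    have expand : ∀ k, Mmat W β a k * (Mmat W β ^ m) k b
        = ∑ τ : Fin (m+1) → V, (if τ 0 = k ∧ τ (Fin.last m) = b then
            Mmat W β a (τ 0) * walkWt W β (List.ofFn τ) else 0) := by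
      intro k
      rw [← ih k, sliceSum, Finset.mul_sum]
      refine Finset.sum_congr rfl fun τ _ => ?_
      rw [mul_ite, mul_zero]
      by_cases h1 : τ 0 = k
      · subst h1; rfl
      · simp [h1]
    rw [Finset.sum_congr rfl (fun k _ => expand k), Finset.sum_comm]
    refine Finset.sum_congr rfl fun τ _ => ?_
    rw [Finset.sum_congr rfl (fun k _ => ite_and (τ 0 = k) _ _ _), Finset.sum_ite_eq]
    simp


lemma abs_quad_le (A : Matrix V V ℝ) (hpos : ∀ a b, 0 ≤ A a b) (x : V → ℝ) :
    |x ⬝ᵥ (A *ᵥ x)| ≤ (fun a => |x a|) ⬝ᵥ (A *ᵥ fun a => |x a|) := by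
  unfold dotProduct Matrix.mulVec dotProduct
  refine le_trans (Finset.abs_sum_le_sum_abs _ _) (Finset.sum_le_sum fun a _ => ?_)
  rw [abs_mul]
  refine mul_le_mul (le_refl _) ?_ (abs_nonneg _) (abs_nonneg _)
  refine le_trans (Finset.abs_sum_le_sum_abs _ _) (Finset.sum_le_sum fun b _ => ?_)
  rw [abs_mul, abs_of_nonneg (hpos a b)]

lemma dot_self_pos {x : V → ℝ} (hx : x ≠ 0) : 0 < x ⬝ᵥ x := by
  obtain ⟨a, ha⟩ : ∃ a, x a ≠ 0 := by
    by_contra h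
    push_neg at h
    exact hx (funext h)
  exact Finset.sum_pos' (fun b _ => mul_self_nonneg _)
    ⟨a, Finset.mem_univ a, mul_self_pos.mpr ha⟩

lemma entry_bound (A : Matrix V V ℝ) [Nonempty V] (hA : A.IsHermitian)
    (hpos : ∀ a b, 0 ≤ A a b)
    (hquad : ∀ x : V → ℝ, x ≠ 0 → x ⬝ᵥ (A *ᵥ x) < x ⬝ᵥ x) :
    ∃ c : ℝ, 0 ≤ c ∧ c < 1 ∧ ∀ (m : ℕ) (a b : V), |(A ^ m) a b| ≤ c ^ m := by
  -- eigenvalues are < 1 in absolute value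
  have heig : ∀ k, |hA.eigenvalues k| < 1 := by
    intro k
    set w : V → ℝ := (WithLp.equiv 2 (V → ℝ)) (hA.eigenvectorBasis k) with hw
    have hwne : w ≠ 0 := by
      have h1 : ‖hA.eigenvectorBasis k‖ = 1 := (hA.eigenvectorBasis).orthonormal.1 k
      intro h0
      have : hA.eigenvectorBasis k = 0 := by
        apply (WithLp.equiv 2 (V → ℝ)).injective
        exact h0.trans (by simp)
      rw [this] at h1
      simp at h1
    have heq : A *ᵥ w = hA.eigenvalues k • w := hA.mulVec_eigenvectorBasis k
    have hquadw : w ⬝ᵥ (A *ᵥ w) = hA.eigenvalues k * (w ⬝ᵥ w) := by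
      rw [heq, dotProduct_smul, smul_eq_mul]
    set aw : V → ℝ := fun a => |w a| with haw
    have hawne : aw ≠ 0 := by
      intro h0
      apply hwne
      funext a
      have := congrFun h0 a
      simpa [haw] using this
    have hawdot : aw ⬝ᵥ aw = w ⬝ᵥ w := by
      unfold dotProduct
      exact Finset.sum_congr rfl fun a _ => abs_mul_abs_self _
    have hkey : |hA.eigenvalues k| * (w ⬝ᵥ w) < w ⬝ᵥ w := by
      calc |hA.eigenvalues k| * (w ⬝ᵥ w) = |hA.eigenvalues k * (w ⬝ᵥ w)| := by
            rw [abs_mul, abs_of_nonneg (le_of_lt (dot_self_pos hwne))]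
        _ = |w ⬝ᵥ (A *ᵥ w)| := by rw [hquadw]
        _ ≤ aw ⬝ᵥ (A *ᵥ aw) := abs_quad_le A hpos w
        _ < aw ⬝ᵥ aw := hquad aw hawne
        _ = w ⬝ᵥ w := hawdot
    have := dot_self_pos hwne
    nlinarith
  refine ⟨Finset.univ.sup' Finset.univ_nonempty (fun k => |hA.eigenvalues k|),
    ?_, ?_, ?_⟩
  · obtain ⟨k⟩ := ‹Nonempty V›
    exact le_trans (abs_nonneg _)
      (Finset.le_sup' (fun k => |hA.eigenvalues k|) (Finset.mem_univ k))
  · rw [Finset.sup'_lt_iff]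
    exact fun k _ => heig k
  · set c := Finset.univ.sup' Finset.univ_nonempty (fun k => |hA.eigenvalues k|) with hc
    have hc0 : 0 ≤ c := by
      obtain ⟨k⟩ := ‹Nonempty V›
      exact le_trans (abs_nonneg _)
        (Finset.le_sup' (fun k => |hA.eigenvalues k|) (Finset.mem_univ k))
    intro m a b
    set U : Matrix V V ℝ := (hA.eigenvectorUnitary : Matrix V V ℝ) with hU
    have hU2 : U * star U = 1 := Matrix.mem_unitaryGroup_iff.mp hA.eigenvectorUnitary.2
    have hU1 : star U * U = 1 := Matrix.mem_unitaryGroup_iff'.mp hA.eigenvectorUnitary.2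
    have hspec : A = U * Matrix.diagonal hA.eigenvalues * star U := by
      have := hA.spectral_theorem
      simpa using this
    have hpow : A ^ m = U * Matrix.diagonal (fun k => hA.eigenvalues k ^ m) * star U := by
      induction m with
      | zero => simp [Matrix.diagonal_one, hU2]
      | succ m ihm =>
        have key : ∀ d1 d2 : V → ℝ,
            (U * Matrix.diagonal d1 * star U) * (U * Matrix.diagonal d2 * star U)
            = U * Matrix.diagonal (fun k => d1 k * d2 k) * star U := by
          intro d1 d2
          rw [← Matrix.diagonal_mul_diagonal]
          simp only [Matrix.mul_assoc]
          rw [← Matrix.mul_assoc (star U) U, hU1, Matrix.one_mul]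
        rw [pow_succ, ihm]
        have hA2 : (U * Matrix.diagonal (fun k => hA.eigenvalues k ^ m) * star U) * A
            = (U * Matrix.diagonal (fun k => hA.eigenvalues k ^ m) * star U) *
              (U * Matrix.diagonal hA.eigenvalues * star U) := by rw [← hspec]
        rw [hA2, key]
        have hfe : (fun k => hA.eigenvalues k ^ m * hA.eigenvalues k)
            = fun k => hA.eigenvalues k ^ (m+1) := funext fun k => (pow_succ _ _).symm
        rw [hfe]
    have hrow : ∀ a : V, ∑ k, U a k ^ 2 = 1 := by
      intro a
      have := congrFun (congrFun hU2 a) a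
      rw [Matrix.mul_apply] at this
      simpa [Matrix.star_apply, sq] using this
    have hentry : (A ^ m) a b = ∑ k, U a k * hA.eigenvalues k ^ m * U b k := by
      rw [hpow, Matrix.mul_apply]
      refine Finset.sum_congr rfl fun k _ => ?_
      rw [Matrix.mul_diagonal]
      simp [Matrix.star_apply, star_trivial]
    rw [hentry]
    have hcs : ∑ k, |U a k| * |U b k| ≤ 1 := by
      have cs := Finset.sum_mul_sq_le_sq_mul_sq Finset.univ (fun k => |U a k|) (fun k => |U b k|)
      simp only [sq_abs] at cs
      rw [hrow a, hrow b, mul_one] at cs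
      have hnn : 0 ≤ ∑ k, |U a k| * |U b k| :=
        Finset.sum_nonneg fun k _ => mul_nonneg (abs_nonneg _) (abs_nonneg _)
      nlinarith
    calc |∑ k, U a k * hA.eigenvalues k ^ m * U b k|
        ≤ ∑ k, |U a k * hA.eigenvalues k ^ m * U b k| := Finset.abs_sum_le_sum_abs _ _
      _ ≤ ∑ k, |U a k| * c ^ m * |U b k| := by
          refine Finset.sum_le_sum fun k _ => ?_
          rw [abs_mul, abs_mul, abs_pow]
          refine mul_le_mul_of_nonneg_right ?_ (abs_nonneg _)
          refine mul_le_mul_of_nonneg_left ?_ (abs_nonneg _)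
          exact pow_le_pow_left₀ (abs_nonneg _) (Finset.le_sup' (fun k => |hA.eigenvalues k|) (Finset.mem_univ k)) m
      _ = c ^ m * ∑ k, |U a k| * |U b k| := by
          rw [Finset.mul_sum]
          exact Finset.sum_congr rfl fun k _ => by ring
      _ ≤ c ^ m * 1 := mul_le_mul_of_nonneg_left hcs (pow_nonneg hc0 m)
      _ = c ^ m := mul_one _


lemma posdef_diag_pos {M : Matrix V V ℝ} (h : M.PosDef) (v : V) : 0 < M v v := by
  have h2 := (posDef_iff_dotProduct_mulVec.mp h).2 (x := Pi.single v 1) (by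
    intro h0
    have := congrFun h0 v
    simp [Pi.single_apply] at this)
  have hstar : star (Pi.single v 1 : V → ℝ) = Pi.single v 1 :=
    funext fun w => star_trivial _
  rw [hstar] at h2
  have : (Pi.single v 1 : V → ℝ) ⬝ᵥ (M *ᵥ Pi.single v 1) = M v v := by
    unfold dotProduct Matrix.mulVec dotProduct
    simp [Pi.single_apply, Finset.sum_ite_eq', mul_comm]
  rw [this] at h2
  exact h2

lemma beta_pos {W : Matrix V V ℝ} {β : V → ℝ} (hWdiag : ∀ i, W i i = 0)
    (hpd : (Hmat W β).PosDef) (v : V) : 0 < β v := by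
  have := posdef_diag_pos hpd v
  have h : Hmat W β v v = 2 * β v := by
    simp [Hmat, Matrix.diagonal_apply_eq, hWdiag v]
  rw [h] at this
  linarith

lemma mpow_bound (W : Matrix V V ℝ) (β : V → ℝ) [Nonempty V] (hWsymm : W.IsSymm)
    (hWpos : ∀ i j, 0 ≤ W i j) (hWdiag : ∀ i, W i i = 0)
    (hpd : (Hmat W β).PosDef) :
    ∃ c : ℝ, 0 ≤ c ∧ c < 1 ∧ ∀ (m : ℕ) (a b : V), |(Mmat W β ^ m) a b| ≤
      (Real.sqrt (2 * β b) / Real.sqrt (2 * β a)) * c ^ m := by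
  have hβ : ∀ v, 0 < β v := beta_pos hWdiag hpd
  set s : V → ℝ := fun v => Real.sqrt (2 * β v) with hs_def
  have hs : ∀ v, 0 < s v := fun v => Real.sqrt_pos.mpr (by linarith [hβ v])
  have hs2 : ∀ v, s v * s v = 2 * β v := fun v =>
    Real.mul_self_sqrt (by linarith [hβ v])
  set A : Matrix V V ℝ := Matrix.of (fun a b => W a b / (s a * s b)) with hA_def
  have hA : A.IsHermitian := by
    refine Matrix.ext fun a b => ?_
    simp only [hA_def, Matrix.conjTranspose_apply, Matrix.of_apply, star_trivial]
    rw [hWsymm.apply a b, mul_comm (s b) (s a)]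
  have hApos : ∀ a b, 0 ≤ A a b := fun a b =>
    div_nonneg (hWpos a b) (le_of_lt (mul_pos (hs a) (hs b)))
  have hquad : ∀ x : V → ℝ, x ≠ 0 → x ⬝ᵥ (A *ᵥ x) < x ⬝ᵥ x := by
    intro x hx
    set y : V → ℝ := fun v => x v / s v with hy_def
    have hyne : y ≠ 0 := by
      intro h0
      apply hx
      funext v
      have := congrFun h0 v
      simp only [hy_def, Pi.zero_apply] at this ⊢
      have := div_eq_zero_iff.mp this
      rcases this with h | h
      · exact h
      · exact absurd h (hs v).ne'
    have hyquad := (posDef_iff_dotProduct_mulVec.mp hpd).2 hyne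
    have hystar : star y = y := funext fun w => star_trivial _
    rw [hystar] at hyquad
    have key : y ⬝ᵥ (Hmat W β *ᵥ y) = x ⬝ᵥ x - x ⬝ᵥ (A *ᵥ x) := by
      have h1 : y ⬝ᵥ (Hmat W β *ᵥ y)
          = y ⬝ᵥ (Matrix.diagonal (fun v => 2 * β v) *ᵥ y) - y ⬝ᵥ (W *ᵥ y) := by
        rw [Hmat, Matrix.sub_mulVec, dotProduct_sub]
      have h2 : y ⬝ᵥ (Matrix.diagonal (fun v => 2 * β v) *ᵥ y) = x ⬝ᵥ x := by
        unfold dotProduct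
        refine Finset.sum_congr rfl fun v _ => ?_
        rw [Matrix.mulVec_diagonal]
        have hsv := (hs v).ne'
        simp only [hy_def]
        field_simp
        rw [sq (s v), hs2 v]
        ring
      have h3 : x ⬝ᵥ (A *ᵥ x) = y ⬝ᵥ (W *ᵥ y) := by
        unfold dotProduct Matrix.mulVec dotProduct
        refine Finset.sum_congr rfl fun a _ => ?_
        rw [Finset.mul_sum, Finset.mul_sum]
        refine Finset.sum_congr rfl fun b _ => ?_
        have hsa := (hs a).ne'
        have hsb := (hs b).ne'
        simp only [hy_def, hA_def, Matrix.of_apply]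
        field_simp
      rw [h1, h2, h3]
    linarith [key, hyquad]
  obtain ⟨c, hc0, hc1, hcb⟩ := entry_bound A hA hApos hquad
  refine ⟨c, hc0, hc1, ?_⟩
  have hMeq : Mmat W β = Matrix.diagonal (fun v => (s v)⁻¹) * A * Matrix.diagonal s := by
    refine Matrix.ext fun a b => ?_
    rw [Matrix.mul_diagonal, Matrix.diagonal_mul]
    simp only [Mmat, hA_def, Matrix.of_apply]
    have hsa := (hs a).ne'
    have hsb := (hs b).ne'
    have h2a : (0:ℝ) < 2 * β a := by linarith [hβ a]
    field_simp
    rw [sq, hs2 a]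
    field_simp
    exact mul_div_cancel_right₀ _ (hβ a).ne'
  have hMpow : ∀ m : ℕ, Mmat W β ^ m
      = Matrix.diagonal (fun v => (s v)⁻¹) * (A ^ m) * Matrix.diagonal s := by
    intro m
    induction m with
    | zero =>
      simp only [pow_zero, Matrix.mul_one]
      rw [Matrix.diagonal_mul_diagonal]
      have : (fun i => (s i)⁻¹ * s i) = fun _ => (1:ℝ) :=
        funext fun i => inv_mul_cancel₀ (hs i).ne'
      rw [this, Matrix.diagonal_one]
    | succ m ihm =>
      rw [pow_succ, pow_succ, ihm, hMeq]
      have : Matrix.diagonal (fun v => (s v)⁻¹) * A ^ m * Matrix.diagonal s *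
          (Matrix.diagonal (fun v => (s v)⁻¹) * A * Matrix.diagonal s)
          = Matrix.diagonal (fun v => (s v)⁻¹) * A ^ m *
            (Matrix.diagonal s * Matrix.diagonal (fun v => (s v)⁻¹)) *
            (A * Matrix.diagonal s) := by
        simp only [Matrix.mul_assoc]
      rw [this, Matrix.diagonal_mul_diagonal]
      have h1 : (fun i => s i * (s i)⁻¹) = fun _ => (1:ℝ) :=
        funext fun i => mul_inv_cancel₀ (hs i).ne'
      rw [h1, Matrix.diagonal_one, Matrix.mul_one]
      simp only [Matrix.mul_assoc]
  intro m a b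
  rw [hMpow m, Matrix.mul_diagonal, Matrix.diagonal_mul]
  rw [abs_mul, abs_mul, abs_of_nonneg (le_of_lt (hs b)),
    abs_of_nonneg (inv_nonneg.mpr (le_of_lt (hs a)))]
  calc (s a)⁻¹ * |(A ^ m) a b| * s b ≤ (s a)⁻¹ * c ^ m * s b := by
        have h1 : (0:ℝ) ≤ (s a)⁻¹ := inv_nonneg.mpr (le_of_lt (hs a))
        have h2 : (0:ℝ) ≤ s b := le_of_lt (hs b)
        exact mul_le_mul_of_nonneg_right
          (mul_le_mul_of_nonneg_left (hcb m a b) h1) h2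
    _ = s b / s a * c ^ m := by field_simp

/-- Encode a nonempty list as a dependent pair. -/
def encode (l : List V) (hl : l ≠ []) : Σ m : ℕ, (Fin (m + 1) → V) :=
  ⟨l.length - 1, fun k => l.get ⟨k.1, by
    have h0 : 0 < l.length := List.length_pos_iff.mpr hl
    have := k.isLt
    omega⟩⟩

lemma ofFn_encode (l : List V) (hl : l ≠ []) : List.ofFn (encode l hl).2 = l := by
  have h0 : 0 < l.length := List.length_pos_iff.mpr hl
  refine List.ext_get ?_ ?_
  · simp only [List.length_ofFn, encode]
    omega
  · intro n h1 h2
    rw [List.get_ofFn]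
    rfl

lemma encode_injective : ∀ (l1 l2 : List V) (h1 : l1 ≠ []) (h2 : l2 ≠ []),
    encode l1 h1 = encode l2 h2 → l1 = l2 := by
  intro l1 l2 h1 h2 h
  have h2' : List.ofFn (encode l1 h1).2 = List.ofFn (encode l2 h2).2 := by rw [h]
  rwa [ofFn_encode, ofFn_encode] at h2'

lemma summable_stopped (W : Matrix V V ℝ) (β : V → ℝ) [Nonempty V] (hWsymm : W.IsSymm)
    (hWpos : ∀ i j, 0 ≤ W i j) (hWdiag : ∀ i, W i i = 0)
    (hpd : (Hmat W β).PosDef) (i v : V) :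
    Summable (fun l : {l : List V // IsStoppedWalkList (fun a b => 0 < W a b) v i l} =>
      walkWt W β (l : List V)) := by
  have hβ := beta_pos hWdiag hpd
  obtain ⟨c, hc0, hc1, hcb⟩ := mpow_bound W β hWsymm hWpos hWdiag hpd
  set g : (Σ m : ℕ, (Fin (m + 1) → V)) → ℝ := fun p =>
    if p.2 0 = v ∧ p.2 (Fin.last p.1) = i then walkWt W β (List.ofFn p.2) else 0 with hg_def
  have hgnn : ∀ p, 0 ≤ g p := by
    intro p
    simp only [hg_def]
    split
    · exact walkWt_nonneg W β hWpos (fun w => le_of_lt (hβ w)) _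
    · exact le_refl 0
  have hslice : ∀ m : ℕ, ∑' σ : Fin (m + 1) → V, g ⟨m, σ⟩ = sliceSum W β m v i := by
    intro m
    rw [tsum_fintype]
    rfl
  have hgsum : Summable g := by
    rw [summable_sigma_of_nonneg hgnn]
    refine ⟨fun m => Summable.of_finite, ?_⟩
    have hre : (fun m : ℕ => ∑' σ : Fin (m + 1) → V, g ⟨m, σ⟩)
        = fun m => sliceSum W β m v i := funext hslice
    rw [hre]
    refine Summable.of_nonneg_of_le (fun m => ?_) (fun m => ?_)
      ((summable_geometric_of_lt_one hc0 hc1).mul_left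
        (Real.sqrt (2 * β i) / Real.sqrt (2 * β v)))
    · refine Finset.sum_nonneg fun σ _ => ?_
      split
      · exact walkWt_nonneg W β hWpos (fun w => le_of_lt (hβ w)) _
      · exact le_refl 0
    · rw [sliceSum_eq]
      exact le_trans (le_abs_self _) (hcb m v i)
  have hfeq : (fun l : {l : List V // IsStoppedWalkList (fun a b => 0 < W a b) v i l} =>
      walkWt W β (l : List V))
      = g ∘ (fun l : {l : List V // IsStoppedWalkList (fun a b => 0 < W a b) v i l} =>
        encode l.1 l.2.1) := by
    funext l
    obtain ⟨l, hne, hhead, hlast, hchain, hdrop⟩ := l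
    simp only [Function.comp_apply, hg_def]
    rw [if_pos, ofFn_encode]
    constructor
    · show l.get ⟨0, _⟩ = v
      have : l.head hne = v := by
        rw [List.head?_eq_head hne] at hhead
        exact Option.some.inj hhead
      show l.get ⟨0, _⟩ = v
      rw [← List.get_mk_zero (List.length_pos_iff.mpr hne)] at this
      exact this
    · show l.get ⟨l.length - 1, _⟩ = i
      have : l.getLast hne = i := by
        rw [List.getLast?_eq_getLast hne] at hlast
        exact Option.some.inj hlast
      exact (List.getLast_eq_getElem hne).symm.trans this
  rw [hfeq]
  refine hgsum.comp_injective ?_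
  intro l1 l2 h
  exact Subtype.ext (encode_injective _ _ _ _ h)

lemma stopped_self_eq {adj : V → V → Prop} {i : V} {l : List V}
    (h : IsStoppedWalkList adj i i l) : l = [i] := by
  obtain ⟨hne, hhead, hlast, -, hdrop⟩ := h
  match l with
  | [] => exact absurd rfl hne
  | [x] =>
    have : x = i := by simpa using hhead
    rw [this]
  | x :: y :: t =>
    have hx : x = i := by simpa using hhead
    exact absurd hx (hdrop x (by rw [List.dropLast_cons₂]; exact List.mem_cons_self))

lemma single_stopped (adj : V → V → Prop) (i : V) : IsStoppedWalkList adj i i [i] := by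
  refine ⟨List.cons_ne_nil i [], rfl, rfl, List.isChain_singleton i, ?_⟩
  intro x hx
  simp at hx

lemma tsum_stopped_self (W : Matrix V V ℝ) (β : V → ℝ) (i : V) :
    ∑' l : {l : List V // IsStoppedWalkList (fun a b => 0 < W a b) i i l},
      walkWt W β (l : List V) = 1 := by
  rw [tsum_eq_single (⟨[i], single_stopped _ i⟩ :
      {l : List V // IsStoppedWalkList (fun a b => 0 < W a b) i i l})]
  · exact walkWt_singleton W β i
  · intro l hl
    exact absurd (Subtype.ext (stopped_self_eq l.2)) hl

lemma dropLast_cons_of_ne_nil (a : V) {l : List V} (h : l ≠ []) :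
    (a :: l).dropLast = a :: l.dropLast := by
  cases l with
  | nil => exact absurd rfl h
  | cons x t => rw [List.dropLast_cons₂]

lemma getLast?_cons_of_ne_nil (a : V) {l : List V} (h : l ≠ []) :
    (a :: l).getLast? = l.getLast? := by
  cases l with
  | nil => exact absurd rfl h
  | cons x t => rw [List.getLast?_cons_cons]

lemma tsum_stopped_succ (W : Matrix V V ℝ) (β : V → ℝ) [Nonempty V] (hWsymm : W.IsSymm)
    (hWpos : ∀ i j, 0 ≤ W i j) (hWdiag : ∀ i, W i i = 0)
    (hpd : (Hmat W β).PosDef) (i v : V) (hvi : v ≠ i) :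
    ∑' l : {l : List V // IsStoppedWalkList (fun a b => 0 < W a b) v i l},
      walkWt W β (l : List V)
    = ∑ k : V, Mmat W β v k *
        ∑' l : {l : List V // IsStoppedWalkList (fun a b => 0 < W a b) k i l},
          walkWt W β (l : List V) := by
  have hβ := beta_pos hWdiag hpd
  let T : V → Type _ := fun k =>
    {l : List V // IsStoppedWalkList (fun a b => 0 < W a b) k i l}
  let g : (Σ k : V, T k) → ℝ := fun p => Mmat W β v p.1 * walkWt W β (p.2 : List V)
  -- the map from support of g to stopped walks from v
  have hcons : ∀ (k : V) (l : T k), 0 < W v k →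
      IsStoppedWalkList (fun a b => 0 < W a b) v i (v :: (l : List V)) := by
    rintro k ⟨l, hne, hhead, hlast, hchain, hdrop⟩ hWvk
    refine ⟨List.cons_ne_nil _ _, rfl, ?_, ?_, ?_⟩
    · rw [getLast?_cons_of_ne_nil v hne]
      exact hlast
    · cases l with
      | nil => exact absurd rfl hne
      | cons x t =>
        have hx : x = k := by simpa using hhead
        show List.IsChain _ (v :: x :: t)
        rw [List.isChain_cons_cons]
        exact ⟨by rw [hx]; exact hWvk, hchain⟩
    · rw [dropLast_cons_of_ne_nil v hne]
      intro x hx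
      rcases List.mem_cons.mp hx with h | h
      · rw [h]; exact hvi
      · exact hdrop x h
  have hMnn : ∀ a b, 0 ≤ Mmat W β a b := fun a b =>
    div_nonneg (hWpos a b) (by linarith [hβ a])
  have hMne : ∀ k, Mmat W β v k ≠ 0 → 0 < W v k := by
    intro k h
    rcases lt_or_eq_of_le (hWpos v k) with h' | h'
    · exact h'
    · exact absurd (by simp [Mmat, ← h']) h
  have hgsum : Summable g := by
    rw [summable_sigma_of_nonneg (fun p => mul_nonneg (hMnn v p.1)
      (walkWt_nonneg W β hWpos (fun w => le_of_lt (hβ w)) _))]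
    constructor
    · intro k
      show Summable fun y : T k => Mmat W β v k * walkWt W β (y : List V)
      exact (summable_stopped W β hWsymm hWpos hWdiag hpd i k).mul_left _
    · exact Summable.of_finite
  have hbij : ∑' l : T v, walkWt W β (l : List V) = ∑' p : (Σ k : V, T k), g p := by
    refine tsum_eq_tsum_of_ne_zero_bij
      (fun p => ⟨v :: (p.1.2 : List V), hcons p.1.1 p.1.2 (hMne p.1.1
        (left_ne_zero_of_mul p.2))⟩) ?_ ?_ ?_
    · rintro ⟨⟨k1, l1⟩, h1⟩ ⟨⟨k2, l2⟩, h2⟩ h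
      have hl : (l1 : List V) = (l2 : List V) := by
        have := congrArg (fun q : T v => (q : List V)) h
        simpa using this
      have hk : k1 = k2 := by
        have e1 := l1.2.2.1
        have e2 := l2.2.2.1
        rw [hl] at e1
        rw [e1] at e2
        exact Option.some.inj e2
      subst hk
      apply Subtype.ext
      show (⟨k1, l1⟩ : Σ k : V, T k) = ⟨k1, l2⟩
      exact congrArg (Sigma.mk k1) (Subtype.ext hl)
    · -- support f ⊆ range
      rintro ⟨l, hsw⟩ hfne
      obtain ⟨hne, hhead, hlast, hchain, hdrop⟩ := hsw
      match l, hne with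
      | [x], _ =>
        have hx : x = v := by simpa using hhead
        have : x = i := by simpa using hlast
        exact absurd (by rw [← hx, this]) hvi
      | x :: y :: t, _ =>
        have hx : x = v := by simpa using hhead
        subst hx
        have hyt : IsStoppedWalkList (fun a b => 0 < W a b) y i (y :: t) := by
          refine ⟨List.cons_ne_nil _ _, rfl, ?_, (List.isChain_cons_cons.mp hchain).2, ?_⟩
          · rw [← List.getLast?_cons_cons (a := x)]
            exact hlast
          · intro z hz
            refine hdrop z ?_
            rw [List.dropLast_cons₂]
            exact List.mem_cons_of_mem _ hz
        have hfval : walkWt W β (x :: y :: t)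
            = Mmat W β x y * walkWt W β (y :: t) := walkWt_cons W β x y t
        have hgne : g ⟨y, ⟨y :: t, hyt⟩⟩ ≠ 0 := by
          intro h0
          apply hfne
          show walkWt W β (x :: y :: t) = 0
          rw [hfval]
          exact h0
        refine ⟨⟨⟨y, ⟨y :: t, hyt⟩⟩, hgne⟩, rfl⟩
    · rintro ⟨⟨k, l⟩, hgne⟩
      show walkWt W β (v :: (l : List V)) = Mmat W β v k * walkWt W β (l : List V)
      obtain ⟨l, hne, hhead, hlast, hchain, hdrop⟩ := l
      cases l with
      | nil => exact absurd rfl hne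
      | cons x t =>
        have hx : x = k := by simpa using hhead
        subst hx
        exact walkWt_cons W β v x t
  rw [hbij, Summable.tsum_sigma hgsum]
  rw [tsum_fintype]
  refine Finset.sum_congr rfl fun k _ => ?_
  show ∑' (c : T k), Mmat W β v k * walkWt W β (c : List V) = _
  exact tsum_mul_left

end Stmt9Aux

open Stmt9Aux in
/-- If `H_β = 2 diag(β) − W` is positive definite and `G = (H_β)⁻¹`, then
for all `i,j` the family `(W_σ/(2β)^−_σ)` indexed by paths `σ` from `j` to `i` not hitting
`i` before their last vertex is summable, with sum `G(i,j)/G(i,i)`. -/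
theorem stmt9 {V : Type*} [Fintype V] [DecidableEq V] [Nonempty V]
    (W : Matrix V V ℝ) (hWsymm : W.IsSymm) (hWpos : ∀ i j, 0 ≤ W i j)
    (hWdiag : ∀ i, W i i = 0) (β : V → ℝ) (hpd : (Hmat W β).PosDef) (i j : V) :
    Summable (fun l : {l : List V // IsStoppedWalkList (fun a b => 0 < W a b) j i l} =>
        wWeight W ↑l / twoBetaMinus β ↑l) ∧
    ∑' l : {l : List V // IsStoppedWalkList (fun a b => 0 < W a b) j i l},
        wWeight W ↑l / twoBetaMinus β ↑l
      = (Hmat W β)⁻¹ i j / (Hmat W β)⁻¹ i i := by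
  have hβ := beta_pos hWdiag hpd
  constructor
  · exact summable_stopped W β hWsymm hWpos hWdiag hpd i j
  set F : V → ℝ := fun v =>
    ∑' l : {l : List V // IsStoppedWalkList (fun a b => 0 < W a b) v i l},
      walkWt W β (l : List V) with hF_def
  have hFi : F i = 1 := tsum_stopped_self W β i
  have hFrec : ∀ v, v ≠ i → F v = ∑ k, Mmat W β v k * F k := fun v hv =>
    tsum_stopped_succ W β hWsymm hWpos hWdiag hpd i v hv
  have hdet : IsUnit (Hmat W β).det := isUnit_iff_ne_zero.mpr (ne_of_gt hpd.det_pos)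
  have hinv : Hmat W β * (Hmat W β)⁻¹ = 1 := Matrix.mul_nonsing_inv _ hdet
  have hGsym : ∀ a b, (Hmat W β)⁻¹ a b = (Hmat W β)⁻¹ b a := by
    intro a b
    have h := hpd.inv.1
    have h2 := congrFun (congrFun h a) b
    rw [Matrix.conjTranspose_apply] at h2
    rw [← h2, star_trivial]
  have hGii : 0 < (Hmat W β)⁻¹ i i := posdef_diag_pos hpd.inv i
  set u : V → ℝ := fun w => (Hmat W β)⁻¹ i w / (Hmat W β)⁻¹ i i with hu_def
  have hui : u i = 1 := div_self hGii.ne'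
  have hHG : ∀ w, ∑ k, Hmat W β w k * (Hmat W β)⁻¹ i k = if w = i then 1 else 0 := by
    intro w
    have h1 : ∑ k, Hmat W β w k * (Hmat W β)⁻¹ i k
        = ∑ k, Hmat W β w k * (Hmat W β)⁻¹ k i :=
      Finset.sum_congr rfl fun k _ => by rw [hGsym i k]
    rw [h1, ← Matrix.mul_apply, hinv, Matrix.one_apply]
  have hHu : ∀ v, v ≠ i → ∑ k, Hmat W β v k * u k = 0 := by
    intro v hv
    have h1 : ∑ k, Hmat W β v k * u k
        = (∑ k, Hmat W β v k * (Hmat W β)⁻¹ i k) / (Hmat W β)⁻¹ i i := by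
      rw [Finset.sum_div]
      exact Finset.sum_congr rfl fun k _ => (mul_div_assoc _ _ _).symm
    rw [h1, hHG v, if_neg hv, zero_div]
  have hHF : ∀ v, v ≠ i → ∑ k, Hmat W β v k * F k = 0 := by
    intro v hv
    have h2β : (2 * β v) ≠ 0 := by
      have := hβ v; positivity
    have expand : ∀ k, Hmat W β v k = (if v = k then 2 * β v else 0) - W v k := by
      intro k
      rw [Hmat, Matrix.sub_apply, Matrix.diagonal_apply]
    have step1 : ∑ k, Hmat W β v k * F k
        = (∑ k, (if v = k then (2 * β v) * F k else 0)) - ∑ k, W v k * F k := by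
      rw [← Finset.sum_sub_distrib]
      refine Finset.sum_congr rfl fun k _ => ?_
      rw [expand k, sub_mul, ite_mul, zero_mul]
    have step2 : ∑ k, (if v = k then (2 * β v) * F k else 0) = (2 * β v) * F v := by
      rw [Finset.sum_ite_eq]
      simp
    have step3 : (2 * β v) * F v = ∑ k, W v k * F k := by
      rw [hFrec v hv, Finset.mul_sum]
      refine Finset.sum_congr rfl fun k _ => ?_
      show 2 * β v * (W v k / (2 * β v) * F k) = W v k * F k
      field_simp
      rw [mul_assoc, mul_div_cancel_left₀ _ (hβ v).ne']
    rw [step1, step2, step3, sub_self]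
  have quad0 : (fun w => F w - u w) ⬝ᵥ (Hmat W β *ᵥ fun w => F w - u w) = 0 := by
    refine Finset.sum_eq_zero fun v _ => ?_
    by_cases hv : v = i
    · subst hv
      have h0 : F v - u v = 0 := by rw [hFi, hui, sub_self]
      show (F v - u v) * _ = 0
      rw [h0, zero_mul]
    · have hin : (Hmat W β *ᵥ fun w => F w - u w) v = 0 := by
        show ∑ k, Hmat W β v k * (F k - u k) = 0
        have : ∑ k, Hmat W β v k * (F k - u k)
            = (∑ k, Hmat W β v k * F k) - ∑ k, Hmat W β v k * u k := by
          rw [← Finset.sum_sub_distrib]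
          exact Finset.sum_congr rfl fun k _ => mul_sub _ _ _
        rw [this, hHF v hv, hHu v hv, sub_self]
      rw [hin, mul_zero]
  have hd0 : (fun w => F w - u w) = 0 := by
    by_contra hne
    have hq := (posDef_iff_dotProduct_mulVec.mp hpd).2 hne
    rw [show star (fun w => F w - u w) = (fun w => F w - u w) from
      funext fun w => star_trivial _] at hq
    rw [quad0] at hq
    exact lt_irrefl 0 hq
  have hj := congrFun hd0 j
  have : F j = u j := by
    have : F j - u j = 0 := hj
    linarith
  exact this
end
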